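/- Let S be a set with a distinguished point 0, let g: S → [0,+∞) vanish only at 0, and for each parameter ω in a metric space (P, d) let b_ω: S → ℝ and g_ω: S → [0,+∞) be families of functions with g_ω = g_{ω} vanishing only at 0. Suppose there exist constants C > 0 and α ∈ (0,1] such that for all ω, ω' ∈ P with δ := d(ω,ω') ≤ 1 and all x ∈ S: (i) b_{ω'}(x) ≥ b_ω(x) − C·δ^α·g_ω(x); (ii) e^{−Cδ}·g_ω(x) ≤ g_{ω'}(x) ≤ e^{Cδ}·g_ω(x). Define σ(ω) := inf_{x∈S, x≠0} b_ω(x)/g_ω(x), and assume σ is locally bounded on P. Then σ is locally Hölder continuous of exponent α on P: for ω, ω' in a fixed bounded set with d(ω,ω') ≤ 1, |σ(ω) − σ(ω')| ≤ C'·d(ω,ω')^α for some constant C' depending on the local bound of σ and on C. -/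
import Mathlib

private lemma aux_min_mul_le {a c r t : ℝ} (ha : 0 < a) (hc : 0 < c) (h1 : c ≤ t) (h2 : t ≤ a) :
    min (a * r) (c * r) ≤ r * t := by
  rcases le_or_gt 0 r with h | h
  · exact (min_le_right _ _).trans (by nlinarith)
  · exact (min_le_left _ _).trans (by nlinarith)

private lemma aux_min_mono {a c m r : ℝ} (ha : 0 < a) (hc : 0 < c) (h : m ≤ r) :
    min (a * m) (c * m) ≤ min (a * r) (c * r) := by
  apply le_min
  · exact (min_le_left _ _).trans (by nlinarith)
  · exact (min_le_right _ _).trans (by nlinarith)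

private lemma aux_min_abs {s m : ℝ} (hs : 0 ≤ s) :
    m - |m| * (Real.exp s - 1) ≤ min (Real.exp s * m) (Real.exp (-s) * m) := by
  have hE : 1 ≤ Real.exp s := Real.one_le_exp hs
  have he : Real.exp s * Real.exp (-s) = 1 := by rw [← Real.exp_add]; simp
  have hFpos : 0 < Real.exp (-s) := Real.exp_pos _
  rcases le_or_gt 0 m with h | h
  · rw [abs_of_nonneg h]
    refine le_min (by nlinarith) ?_
    nlinarith [sq_nonneg (Real.exp s - 1)]
  · rw [abs_of_neg h]
    have hF1 : Real.exp (-s) ≤ 1 := by nlinarith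
    refine le_min (by nlinarith) ?_
    nlinarith [mul_nonneg (neg_nonneg.mpr h.le) (sub_nonneg.mpr (hF1.trans hE))]

/-- Abstract Hölder continuity of a stability threshold σ(ω) = inf_{x≠0} b_ω(x)/g_ω(x). -/
theorem threshold_holder_continuous {S P : Type*} [MetricSpace P]
    (z0 : S) (hne : ∃ x : S, x ≠ z0)
    (b g : P → S → ℝ)
    (hgnn : ∀ ω x, 0 ≤ g ω x) (hg0 : ∀ ω x, g ω x = 0 ↔ x = z0)
    (C α : ℝ) (hC : 0 < C) (hα : 0 < α) (hα1 : α ≤ 1)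
    (h1 : ∀ ω ω' : P, dist ω ω' ≤ 1 → ∀ x : S,
      b ω x - C * (dist ω ω') ^ α * g ω x ≤ b ω' x)
    (h2 : ∀ ω ω' : P, dist ω ω' ≤ 1 → ∀ x : S,
      Real.exp (-(C * dist ω ω')) * g ω x ≤ g ω' x ∧
      g ω' x ≤ Real.exp (C * dist ω ω') * g ω x)
    (σ : P → ℝ)
    (hσ : ∀ ω, σ ω = sInf {r : ℝ | ∃ x : S, x ≠ z0 ∧ r = b ω x / g ω x})
    (Q : Set P) (B : ℝ) (hB : ∀ ω ∈ Q, |σ ω| ≤ B) :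
    ∃ C' : ℝ, 0 < C' ∧ ∀ ω ∈ Q, ∀ ω' ∈ Q, dist ω ω' ≤ 1 →
      |σ ω - σ ω'| ≤ C' * (dist ω ω') ^ α := by
  classical
  obtain ⟨x0, hx0⟩ := hne
  set C' : ℝ := C * Real.exp C * (|B| + 1) + 1 with hC'def
  have hC'pos : 0 < C' := by positivity
  refine ⟨C', hC'pos, ?_⟩
  have hgpos : ∀ (ω : P) (x : S), x ≠ z0 → 0 < g ω x := by
    intro ω x hx
    rcases (hgnn ω x).lt_or_eq with h | h
    · exact h
    · exact absurd ((hg0 ω x).mp h.symm) hx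
  -- pointwise estimate
  have ptwise : ∀ ω ω' : P, dist ω ω' ≤ 1 → ∀ x : S, x ≠ z0 →
      min (Real.exp (C * dist ω ω') * (b ω x / g ω x))
          (Real.exp (-(C * dist ω ω')) * (b ω x / g ω x))
        - C * (dist ω ω') ^ α * Real.exp (C * dist ω ω')
        ≤ b ω' x / g ω' x := by
    intro ω ω' hd x hx
    obtain ⟨hlo, hhi⟩ := h2 ω ω' hd x
    have hgx := hgpos ω x hx
    have hgx' := hgpos ω' x hx
    set δ := dist ω ω' with hδdef
    have hδ0 : 0 ≤ δ := dist_nonneg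
    set t : ℝ := g ω x / g ω' x with htdef
    have htpos : 0 < t := div_pos hgx hgx'
    have hme : Real.exp (C * δ) * Real.exp (-(C * δ)) = 1 := by
      rw [← Real.exp_add]; simp
    have ht2 : t ≤ Real.exp (C * δ) := by
      rw [htdef, div_le_iff₀ hgx']
      nlinarith [Real.exp_pos (C * δ), Real.exp_pos (-(C * δ))]
    have ht1 : Real.exp (-(C * δ)) ≤ t := by
      rw [htdef, le_div_iff₀ hgx']
      nlinarith [Real.exp_pos (C * δ), Real.exp_pos (-(C * δ))]
    have hδα : 0 ≤ C * δ ^ α := by positivity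
    have h3 : (b ω x - C * δ ^ α * g ω x) / g ω' x ≤ b ω' x / g ω' x :=
      (div_le_div_iff_of_pos_right hgx').mpr (h1 ω ω' hd x)
    have heq : (b ω x - C * δ ^ α * g ω x) / g ω' x
        = (b ω x / g ω x) * t - C * δ ^ α * t := by
      rw [htdef]; field_simp
    have hmin := aux_min_mul_le (Real.exp_pos (C * δ)) (Real.exp_pos (-(C * δ)))
      ht1 ht2 (r := b ω x / g ω x)
    have hKt : C * δ ^ α * t ≤ C * δ ^ α * Real.exp (C * δ) :=
      mul_le_mul_of_nonneg_left ht2 hδα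
    rw [heq] at h3
    linarith
  -- one-sided estimate
  have main : ∀ ω ∈ Q, ∀ ω' ∈ Q, dist ω ω' ≤ 1 →
      σ ω - C' * (dist ω ω') ^ α ≤ σ ω' := by
    intro ω hω ω' hω' hd
    have hδ0 : 0 ≤ dist ω ω' := dist_nonneg
    rcases eq_or_lt_of_le hδ0 with h0 | hδpos
    · -- dist = 0 : everything is equal
      have hd0 : dist ω ω' = 0 := h0.symm
      have hd0' : dist ω' ω = 0 := by rw [dist_comm]; exact hd0
      have hz : (0:ℝ) ^ α = 0 := Real.zero_rpow hα.ne'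
      have hbg : ∀ x : S, b ω x = b ω' x ∧ g ω x = g ω' x := by
        intro x
        have e1 := h1 ω ω' hd x
        have e2 := h1 ω' ω (by rw [dist_comm]; exact hd) x
        obtain ⟨f1, f2⟩ := h2 ω ω' hd x
        rw [hd0] at e1 f1 f2
        rw [hd0'] at e2
        rw [hz] at e1 e2
        simp only [mul_zero, zero_mul, sub_zero, neg_zero, Real.exp_zero, one_mul] at e1 e2 f1 f2
        exact ⟨le_antisymm e1 e2, le_antisymm f1 f2⟩
      have hset : {r : ℝ | ∃ x : S, x ≠ z0 ∧ r = b ω x / g ω x}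
          = {r : ℝ | ∃ x : S, x ≠ z0 ∧ r = b ω' x / g ω' x} := by
        ext r
        simp only [Set.mem_setOf_eq]
        constructor
        · rintro ⟨x, hx, rfl⟩
          exact ⟨x, hx, by rw [(hbg x).1, (hbg x).2]⟩
        · rintro ⟨x, hx, rfl⟩
          exact ⟨x, hx, by rw [(hbg x).1, (hbg x).2]⟩
      have hσeq : σ ω = σ ω' := by rw [hσ, hσ, hset]
      rw [hd0, hz, hσeq]
      simp
    · -- dist > 0
      set δ := dist ω ω' with hδdef
      have hδα_pos : 0 < δ ^ α := Real.rpow_pos_of_pos hδpos α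
      have hδle : δ ≤ δ ^ α := by
        calc δ = δ ^ (1:ℝ) := (Real.rpow_one δ).symm
          _ ≤ δ ^ α := Real.rpow_le_rpow_of_exponent_ge hδpos hd hα1
      have hE1 : (1:ℝ) ≤ Real.exp (C * δ) := Real.one_le_exp (by positivity)
      have hEe : Real.exp (C * δ) ≤ Real.exp C :=
        Real.exp_le_exp.mpr (by nlinarith)
      have hme : Real.exp (C * δ) * Real.exp (-(C * δ)) = 1 := by
        rw [← Real.exp_add]; simp
      have hexp_sub : Real.exp (C * δ) - 1 ≤ C * δ * Real.exp C := by
        have h := Real.add_one_le_exp (-(C * δ))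
        nlinarith [mul_le_mul_of_nonneg_left h (Real.exp_pos (C * δ)).le,
          mul_le_mul_of_nonneg_left hEe (mul_nonneg hC.le hδ0)]
      by_cases hbdd : BddBelow {r : ℝ | ∃ x : S, x ≠ z0 ∧ r = b ω x / g ω x}
      · have hlb : ∀ x : S, x ≠ z0 → σ ω ≤ b ω x / g ω x := by
          intro x hx
          rw [hσ]
          exact csInf_le hbdd ⟨x, hx, rfl⟩
        have habs : |σ ω| ≤ |B| := (hB ω hω).trans (le_abs_self B)
        have hlow : ∀ r ∈ {r : ℝ | ∃ x : S, x ≠ z0 ∧ r = b ω' x / g ω' x},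
            σ ω - C' * δ ^ α ≤ r := by
          rintro r ⟨x, hx, rfl⟩
          have hp := ptwise ω ω' hd x hx
          have hr0 : σ ω ≤ b ω x / g ω x := hlb x hx
          have hmin1 := aux_min_mono (Real.exp_pos (C * δ)) (Real.exp_pos (-(C * δ))) hr0
          have hmin2 := aux_min_abs (m := σ ω) (mul_nonneg hC.le hδ0)
          have habs0 : 0 ≤ |σ ω| := abs_nonneg _
          have hb0 : 0 ≤ |B| := abs_nonneg _
          have key1 : |σ ω| * (Real.exp (C * δ) - 1) ≤ |B| * (C * δ * Real.exp C) := by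
            apply mul_le_mul habs hexp_sub (by linarith) hb0
          have key2 : |B| * (C * δ * Real.exp C) ≤ |B| * (C * δ ^ α * Real.exp C) := by
            apply mul_le_mul_of_nonneg_left _ hb0
            have := mul_le_mul_of_nonneg_left hδle hC.le
            nlinarith [Real.exp_pos C]
          have key3 : C * δ ^ α * Real.exp (C * δ) ≤ C * δ ^ α * Real.exp C :=
            mul_le_mul_of_nonneg_left hEe (by positivity)
          have hC'exp : C' * δ ^ α = C * Real.exp C * (|B| + 1) * δ ^ α + δ ^ α := by
            rw [hC'def]; ring
          nlinarith
        rw [hσ ω']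
        exact le_csInf ⟨_, x0, hx0, rfl⟩ hlow
      · have hbdd' : ¬ BddBelow {r : ℝ | ∃ x : S, x ≠ z0 ∧ r = b ω' x / g ω' x} := by
          rintro ⟨m, hm⟩
          apply hbdd
          have hd' : dist ω' ω ≤ 1 := by rw [dist_comm]; exact hd
          refine ⟨min (Real.exp (C * dist ω' ω) * m) (Real.exp (-(C * dist ω' ω)) * m)
            - C * (dist ω' ω) ^ α * Real.exp (C * dist ω' ω), ?_⟩
          rintro r ⟨x, hx, rfl⟩
          have hp := ptwise ω' ω hd' x hx
          have hm' : m ≤ b ω' x / g ω' x := hm ⟨x, hx, rfl⟩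
          have hmin := aux_min_mono (Real.exp_pos (C * dist ω' ω))
            (Real.exp_pos (-(C * dist ω' ω))) hm'
          linarith
        have hσω : σ ω = 0 := by rw [hσ]; exact Real.sInf_of_not_bddBelow hbdd
        have hσω' : σ ω' = 0 := by rw [hσ]; exact Real.sInf_of_not_bddBelow hbdd'
        rw [hσω, hσω']
        nlinarith
  intro ω hω ω' hω' hd
  have k1 := main ω hω ω' hω' hd
  have hd' : dist ω' ω ≤ 1 := by rw [dist_comm]; exact hd
  have k2 := main ω' hω' ω hω hd'
  rw [dist_comm ω' ω] at k2
  rw [abs_sub_le_iff]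
  constructor <;> linarith
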